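/- Let n ≥ 2 be an integer and ℓ a natural number. Let g : ℝ → ℝ be such that g and deriv g are differentiable everywhere. Then for every t ∈ ℝ, (D_{n,ℓ} (fun s => Real.exp (2s) · g s))(t) = Real.exp (2t) · ( deriv (deriv g) t − (n−6)·deriv g t − (ℓ+2)(ℓ+n−4)·g t ). Note that the second-order operator on the right factors as (∂_t + (ℓ+2))(∂_t − (ℓ+n−4)); this yields the factorization of the Bilaplacian on the ℓ-th spherical-harmonic mode in logarithmic radial coordinates as e^{4t}(∂_t + ℓ)(∂_t − (ℓ+n−2))(∂_t + (ℓ+2))(∂_t − (ℓ+n−4)). -/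

import Mathlib

open Real

/-- The projected radial Laplacian of the ℓ-th spherical harmonic mode in the logarithmic
coordinate `r = e^{-t}`: `(D_{n,ℓ} w)(t) = w''(t) - (n-2) w'(t) - ℓ(ℓ+n-2) w(t)`. -/
noncomputable def logRadialLap (n ℓ : ℕ) (w : ℝ → ℝ) (t : ℝ) : ℝ :=
  deriv (deriv w) t - ((n : ℝ) - 2) * deriv w t - (ℓ : ℝ) * ((ℓ : ℝ) + n - 2) * w t

lemma exp2_diff (t : ℝ) : DifferentiableAt ℝ (fun s : ℝ => Real.exp (2 * s)) t := by
  exact (Real.differentiable_exp.comp ((differentiable_id.const_mul 2))).differentiableAt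

lemma exp2_deriv (t : ℝ) : deriv (fun s : ℝ => Real.exp (2 * s)) t = 2 * Real.exp (2 * t) := by
  have h : HasDerivAt (fun s : ℝ => Real.exp (2 * s)) (Real.exp (2 * t) * 2) t :=
    (Real.hasDerivAt_exp (2 * t)).comp t (by simpa using (hasDerivAt_id t).const_mul 2)
  rw [h.deriv]; ring

lemma first_deriv (g : ℝ → ℝ) (hg : ∀ t : ℝ, DifferentiableAt ℝ g t) :
    deriv (fun s : ℝ => Real.exp (2 * s) * g s)
      = fun t => Real.exp (2 * t) * (2 * g t + deriv g t) := by
  funext t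
  rw [deriv_fun_mul (exp2_diff t) (hg t), exp2_deriv]
  ring

/-- Conjugating `D_{n,ℓ}` by multiplication with `e^{2t}` yields the second-order operator
`∂_t² - (n-6)∂_t - (ℓ+2)(ℓ+n-4)`, which factors as `(∂_t + (ℓ+2))(∂_t - (ℓ+n-4))`; this
gives the factorization of the Bilaplacian on the ℓ-th mode in logarithmic coordinates. -/
theorem logRadialLap_conjugate_exp (n : ℕ) (hn : 2 ≤ n) (ℓ : ℕ) (g : ℝ → ℝ)
    (hg : ∀ t : ℝ, DifferentiableAt ℝ g t)
    (hg' : ∀ t : ℝ, DifferentiableAt ℝ (deriv g) t) :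
    ∀ t : ℝ,
      logRadialLap n ℓ (fun s : ℝ => Real.exp (2 * s) * g s) t =
        Real.exp (2 * t) *
          (deriv (deriv g) t - ((n : ℝ) - 6) * deriv g t -
            ((ℓ : ℝ) + 2) * ((ℓ : ℝ) + n - 4) * g t) := by
  intro t
  have h1 := first_deriv g hg
  have h2 : deriv (deriv (fun s : ℝ => Real.exp (2 * s) * g s)) t
      = Real.exp (2 * t) * (4 * g t + 4 * deriv g t + deriv (deriv g) t) := by
    rw [h1]
    have hin : DifferentiableAt ℝ (fun s : ℝ => 2 * g s + deriv g s) t := by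
      exact ((hg t).const_mul 2).add (hg' t)
    rw [deriv_fun_mul (exp2_diff t) hin, exp2_deriv, deriv_fun_add ((hg t).const_mul 2) (hg' t),
      deriv_const_mul 2 (hg t)]
    ring
  unfold logRadialLap
  rw [h2, h1]
  ring
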